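/- arXiv:1807.06585 — 2 statements merged into one kernel-verified Lean document; each statement's English description precedes it below -/
import Mathlib

section
/- There exists a constant C > 0 such that for every Schwartz function u : ℝ⁴ → ℝ that is radially symmetric, one has |x|·|u(x)| ≤ C‖u‖_{Ḣ¹(ℝ⁴)} for all x ∈ ℝ⁴, where ‖u‖_{Ḣ¹} = ‖∇u‖_{L²(ℝ⁴)}. -/
open Real MeasureTheory Set Filter

local notation "E4" => EuclideanSpace ℝ (Fin 4)

noncomputable def e1 : EuclideanSpace ℝ (Fin 4) := EuclideanSpace.single 0 1

lemma norm_e1 : ‖e1‖ = 1 := by simp [e1]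

lemma norm_smul_e1 (s : ℝ) (hs : 0 ≤ s) : ‖s • e1‖ = s := by
  rw [norm_smul, norm_e1, mul_one, Real.norm_eq_abs, abs_of_nonneg hs]

lemma radial_fderiv_norm (u : SchwartzMap E4 ℝ)
    (hrad : ∀ x y : E4, ‖x‖ = ‖y‖ → u x = u y)
    {a b : E4} (hab : ‖a‖ = ‖b‖) : ‖fderiv ℝ u a‖ = ‖fderiv ℝ u b‖ := by
  set A : E4 ≃ₗᵢ[ℝ] E4 := Submodule.reflection (ℝ ∙ (a - b))ᗮ with hA
  have hAab : A a = b := Submodule.reflection_sub hab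
  have hcomp : (fun z => u (A z)) = fun z => u z :=
    funext fun z => hrad _ _ (A.norm_map z)
  have hd : HasFDerivAt (fun z => u (A z))
      ((fderiv ℝ u (A a)).comp (A : E4 →L[ℝ] E4)) a :=
    (u.differentiable (A a)).hasFDerivAt.comp a A.hasFDerivAt
  rw [hcomp] at hd
  have h2 : fderiv ℝ u a = (fderiv ℝ u (A a)).comp (A : E4 →L[ℝ] E4) := hd.fderiv
  rw [h2, hAab]
  have h3 := ContinuousLinearMap.opNorm_comp_linearIsometryEquiv (fderiv ℝ u b) A
  rw [← hAab, hAab] at h3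
  convert h3 using 2

/-- decay of the gradient with weight `k` -/
lemma fderiv_decay (u : SchwartzMap E4 ℝ) (k : ℕ) :
    ∃ C, 0 ≤ C ∧ ∀ x : E4, ‖x‖ ^ k * ‖fderiv ℝ u x‖ ≤ C := by
  obtain ⟨C, hC0, hC⟩ := (SchwartzMap.fderivCLM ℝ E4 ℝ u).decay k 0
  refine ⟨C, hC0.le, fun x => ?_⟩
  have := hC x
  rwa [norm_iteratedFDeriv_zero, SchwartzMap.fderivCLM_apply] at this

theorem radial_sobolev_R4 :
    ∃ C > 0, ∀ u : SchwartzMap (EuclideanSpace ℝ (Fin 4)) ℝ,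
      (∀ x y : EuclideanSpace ℝ (Fin 4), ‖x‖ = ‖y‖ → u x = u y) →
      ∀ x : EuclideanSpace ℝ (Fin 4),
        ‖x‖ * |u x| ≤ C * (∫ y, ‖fderiv ℝ u y‖ ^ 2) ^ ((1:ℝ)/2) := by
  set V : ℝ := (volume (Metric.ball (0 : E4) 1)).toReal with hVdef
  have hVpos : 0 < V := ENNReal.toReal_pos (Metric.measure_ball_pos volume 0 one_pos).ne'
    measure_ball_lt_top.ne
  refine ⟨(1/(4*V)) ^ ((1:ℝ)/2) * (1/2 : ℝ) ^ ((1:ℝ)/2), by positivity, fun u hrad x => ?_⟩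
  set I : ℝ := ∫ y : E4, ‖fderiv ℝ u y‖ ^ 2 with hIdef
  have hInonneg : 0 ≤ I := integral_nonneg fun y => by positivity
  set g : ℝ → ℝ := fun s => ‖fderiv ℝ u (s • e1)‖ with hgdef
  have hgcont : Continuous g := by
    have h1 : Continuous fun s : ℝ => s • e1 := continuous_id.smul continuous_const
    have h2 : Continuous fun z : E4 => fderiv ℝ u z := by
      have := (SchwartzMap.fderivCLM ℝ E4 ℝ u).continuous
      exact (u.smooth ⊤).continuous_fderiv (by simp)
    exact ((h2.comp h1)).norm
  have hgnonneg : ∀ s, 0 ≤ g s := fun s => norm_nonneg _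
  set J : ℝ := ∫ s in Ioi (0:ℝ), s ^ 3 * g s ^ 2 with hJdef
  -- polar coordinates
  have hfun_eq : (fun y : E4 => g ‖y‖ ^ 2) = fun y : E4 => ‖fderiv ℝ u y‖ ^ 2 := by
    funext y
    rw [hgdef]
    simp only
    rw [radial_fderiv_norm u hrad (norm_smul_e1 ‖y‖ (norm_nonneg y))]
  have hpolar : I = 4 * (V * J) := by
    have h := MeasureTheory.integral_fun_norm_addHaar (volume : Measure E4)
      (fun t => g t ^ 2)
    rw [hfun_eq] at h
    simp only [finrank_euclideanSpace_fin, nsmul_eq_mul, smul_eq_mul] at h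
    rw [hIdef, h, hJdef]
    norm_num
    exact Or.inl rfl
  have hJnonneg : 0 ≤ J := setIntegral_nonneg measurableSet_Ioi fun s hs => by
    have h0 : (0:ℝ) < s := hs
    positivity
  -- decay bounds
  obtain ⟨C0, hC00, hC0⟩ := fderiv_decay u 0
  obtain ⟨C2, hC20, hC2⟩ := fderiv_decay u 2
  obtain ⟨C5, hC50, hC5⟩ := fderiv_decay u 5
  have hg_pow : ∀ k : ℕ, ∃ C, 0 ≤ C ∧ ∀ s : ℝ, 0 < s → s ^ k * g s ≤ C := by
    intro k
    obtain ⟨C, hC0', hC⟩ := fderiv_decay u k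
    refine ⟨C, hC0', fun s hs => ?_⟩
    have := hC (s • e1)
    rwa [norm_smul_e1 s hs.le] at this
  obtain ⟨D2, hD20, hD2⟩ := hg_pow 2
  obtain ⟨D5, hD50, hD5⟩ := hg_pow 5
  have hg_bdd : ∀ s : ℝ, g s ≤ C0 := fun s => by simpa using hC0 (s • e1)
  -- integrability of s^3 g^2 on (0,∞)
  have hrpow_neg2 : ∀ s : ℝ, 0 < s → s ^ (-2:ℝ) = (s ^ 2)⁻¹ := by
    intro s hs
    rw [show (-2:ℝ) = -((2:ℕ):ℝ) by norm_num, Real.rpow_neg hs.le, Real.rpow_natCast]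
  have hJint : IntegrableOn (fun s => s ^ 3 * g s ^ 2) (Ioi (0:ℝ)) := by
    have h1 : IntegrableOn (fun s => s ^ 3 * g s ^ 2) (Ioc (0:ℝ) 1) :=
      ((continuous_id.pow 3).mul (hgcont.pow 2)).integrableOn_Ioc
    have h2 : IntegrableOn (fun s => s ^ 3 * g s ^ 2) (Ioi (1:ℝ)) := by
      refine Integrable.mono'
        ((integrableOn_Ioi_rpow_of_lt (by norm_num : (-2:ℝ) < -1) one_pos).const_mul (D5 * C0))
        (((continuous_id.pow 3).mul (hgcont.pow 2)).aestronglyMeasurable) ?_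
      filter_upwards [ae_restrict_mem measurableSet_Ioi] with s hs
      have hs1 : (1:ℝ) < s := hs
      have hs0 : (0:ℝ) < s := lt_trans one_pos hs1
      rw [Real.norm_eq_abs, abs_of_nonneg (by positivity), hrpow_neg2 s hs0,
        show D5 * C0 * (s ^ 2)⁻¹ = D5 * C0 / s ^ 2 by ring, le_div_iff₀ (by positivity)]
      have hkey := mul_le_mul (hD5 s hs0) (hg_bdd s) (hgnonneg s) hD50
      nlinarith [hkey, hgnonneg s, pow_pos hs0 2, pow_pos hs0 3]
    exact (h1.union h2).congr_set_ae (by rw [Ioc_union_Ioi_eq_Ioi (le_of_lt one_pos)]; exact EventuallyEq.rfl)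
  rcases eq_or_lt_of_le (norm_nonneg x) with hx0 | hr
  · rw [← hx0, zero_mul]
    exact mul_nonneg (by positivity) (Real.rpow_nonneg hInonneg _)
  · set r : ℝ := ‖x‖ with hrdef
    set f : ℝ → ℝ := fun s => u (s • e1) with hfdef
    have hux : u x = f r := hrad x (r • e1) (by rw [norm_smul_e1 r hr.le])
    set f' : ℝ → ℝ := fun s => (fderiv ℝ u (s • e1)) e1 with hf'def
    have hderiv : ∀ s : ℝ, HasDerivAt f (f' s) s := by
      intro s
      have h1 : HasFDerivAt u (fderiv ℝ u (s • e1)) (s • e1) := (u.differentiable _).hasFDerivAt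
      have h2 : HasDerivAt (fun t : ℝ => t • e1) e1 s := by
        simpa using (hasDerivAt_id s).smul_const e1
      exact h1.comp_hasDerivAt s h2
    have hfdcont : Continuous fun z : E4 => fderiv ℝ u z := by
      exact (u.smooth ⊤).continuous_fderiv (by simp)
    have hf'cont : Continuous f' :=
      (hfdcont.comp (continuous_id.smul continuous_const)).clm_apply continuous_const
    have hf'le : ∀ s, ‖f' s‖ ≤ g s := by
      intro s
      calc ‖f' s‖ ≤ ‖fderiv ℝ u (s • e1)‖ * ‖e1‖ := ContinuousLinearMap.le_opNorm _ _
      _ = g s := by rw [norm_e1, mul_one]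
    have hmaj : IntegrableOn (fun s : ℝ => D2 * s ^ (-2:ℝ)) (Ioi r) :=
      (integrableOn_Ioi_rpow_of_lt (by norm_num) hr).const_mul D2
    have hgle : ∀ s ∈ Ioi r, g s ≤ D2 * s ^ (-2:ℝ) := by
      intro s hs
      have hs0 : 0 < s := hr.trans hs
      rw [hrpow_neg2 s hs0, show D2 * (s^2)⁻¹ = D2 / s^2 by ring, le_div_iff₀ (by positivity)]
      have := hD2 s hs0
      nlinarith [this]
    have hgint : IntegrableOn g (Ioi r) := by
      refine Integrable.mono' hmaj hgcont.aestronglyMeasurable ?_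
      filter_upwards [ae_restrict_mem measurableSet_Ioi] with s hs
      rw [Real.norm_eq_abs, abs_of_nonneg (hgnonneg s)]
      exact hgle s hs
    have hf'int : IntegrableOn f' (Ioi r) := by
      refine Integrable.mono' hgint hf'cont.aestronglyMeasurable (ae_of_all _ hf'le)
    obtain ⟨C1, hC10, hC1⟩ : ∃ C, 0 ≤ C ∧ ∀ y : E4, ‖y‖ * ‖u y‖ ≤ C := by
      obtain ⟨C, hCpos, hC⟩ := u.decay 1 0
      refine ⟨C, hCpos.le, fun y => ?_⟩
      have := hC y
      rwa [norm_iteratedFDeriv_zero, pow_one] at this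
    have htend : Tendsto f atTop (nhds 0) := by
      have hbound : ∀ᶠ s : ℝ in atTop, ‖f s‖ ≤ C1 * s⁻¹ := by
        filter_upwards [eventually_gt_atTop 0] with s hs
        have h1 := hC1 (s • e1)
        rw [norm_smul_e1 s hs.le] at h1
        rw [show C1 * s⁻¹ = C1 / s by ring, le_div_iff₀ hs]
        calc ‖f s‖ * s = s * ‖u (s • e1)‖ := by rw [hfdef]; ring
        _ ≤ C1 := h1
      have hlim : Tendsto (fun s : ℝ => C1 * s⁻¹) atTop (nhds 0) := by
        simpa using tendsto_inv_atTop_zero.const_mul C1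
      exact squeeze_zero_norm' hbound hlim
    have hFTC : ∫ s in Ioi r, f' s = 0 - f r :=
      integral_Ioi_of_hasDerivAt_of_tendsto' (fun s _ => hderiv s) hf'int htend
    have habs : |f r| ≤ ∫ s in Ioi r, g s := by
      have h1 : f r = -∫ s in Ioi r, f' s := by rw [hFTC]; ring
      rw [h1, abs_neg, ← Real.norm_eq_abs]
      exact norm_integral_le_of_norm_le hgint (ae_of_all _ hf'le)
    -- Cauchy-Schwarz
    have hpq : Real.HolderConjugate 2 2 := Real.HolderConjugate.two_two
    set φ : ℝ → ℝ := fun s => s ^ ((3:ℝ)/2) * g s with hphidef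
    set ψ : ℝ → ℝ := fun s => s ^ (-(3:ℝ)/2) with hpsidef
    have hφmeas : AEStronglyMeasurable φ (volume.restrict (Ioi r)) := by
      refine ContinuousOn.aestronglyMeasurable (ContinuousOn.mul ?_ hgcont.continuousOn)
        measurableSet_Ioi
      intro s hs
      exact (Real.continuousAt_rpow_const s _ (Or.inl (ne_of_gt (hr.trans hs)))).continuousWithinAt
    have hψmeas : AEStronglyMeasurable ψ (volume.restrict (Ioi r)) := by
      refine ContinuousOn.aestronglyMeasurable ?_ measurableSet_Ioi
      intro s hs
      exact (Real.continuousAt_rpow_const s _ (Or.inl (ne_of_gt (hr.trans hs)))).continuousWithinAt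
    have hsq_φ : EqOn (fun s => s ^ 3 * g s ^ 2) (fun s => φ s ^ 2) (Ioi r) := by
      intro s hs
      have hs0 : (0:ℝ) < s := hr.trans hs
      have hss : (s ^ ((3:ℝ)/2)) ^ (2:ℕ) = s ^ (3:ℕ) := by
        rw [← Real.rpow_natCast (s ^ ((3:ℝ)/2)) 2, ← Real.rpow_mul hs0.le,
          show (3:ℝ)/2 * ((2:ℕ):ℝ) = ((3:ℕ):ℝ) by push_cast; norm_num, Real.rpow_natCast]
      simp only [hphidef, mul_pow, hss]
    have hφint2 : Integrable (fun s => φ s ^ 2) (volume.restrict (Ioi r)) :=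
      (hJint.mono_set (Ioi_subset_Ioi hr.le)).congr_fun hsq_φ measurableSet_Ioi
    have hφ2 : MemLp φ (ENNReal.ofReal 2) (volume.restrict (Ioi r)) := by
      rw [show ENNReal.ofReal 2 = 2 from by norm_num]
      exact (memLp_two_iff_integrable_sq hφmeas).2 hφint2
    have hsq_ψ : EqOn (fun s : ℝ => s ^ (-3:ℝ)) (fun s => ψ s ^ 2) (Ioi r) := by
      intro s hs
      have hs0 : (0:ℝ) < s := hr.trans hs
      simp only [hpsidef]
      rw [← Real.rpow_natCast (s ^ (-(3:ℝ)/2)) 2, ← Real.rpow_mul hs0.le,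
        show -(3:ℝ)/2 * ((2:ℕ):ℝ) = (-3:ℝ) by push_cast; norm_num]
    have hψint2 : Integrable (fun s => ψ s ^ 2) (volume.restrict (Ioi r)) :=
      (integrableOn_Ioi_rpow_of_lt (by norm_num : (-3:ℝ) < -1) hr).congr_fun hsq_ψ
        measurableSet_Ioi
    have hψ2 : MemLp ψ (ENNReal.ofReal 2) (volume.restrict (Ioi r)) := by
      rw [show ENNReal.ofReal 2 = 2 from by norm_num]
      exact (memLp_two_iff_integrable_sq hψmeas).2 hψint2
    have hφnn : 0 ≤ᵐ[volume.restrict (Ioi r)] φ := by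
      filter_upwards [ae_restrict_mem measurableSet_Ioi] with s hs
      have hs0 : (0:ℝ) < s := hr.trans hs
      exact mul_nonneg (Real.rpow_nonneg hs0.le _) (hgnonneg s)
    have hψnn : 0 ≤ᵐ[volume.restrict (Ioi r)] ψ := by
      filter_upwards [ae_restrict_mem measurableSet_Ioi] with s hs
      exact Real.rpow_nonneg (hr.trans hs).le _
    have hCS := integral_mul_le_Lp_mul_Lq_of_nonneg hpq hφnn hψnn hφ2 hψ2
    have he1 : ∫ s in Ioi r, φ s * ψ s = ∫ s in Ioi r, g s := by
      refine setIntegral_congr_fun measurableSet_Ioi fun s hs => ?_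
      have hs0 : (0:ℝ) < s := hr.trans hs
      simp only [hphidef, hpsidef]
      calc s ^ ((3:ℝ)/2) * g s * s ^ (-(3:ℝ)/2)
          = g s * (s ^ ((3:ℝ)/2) * s ^ (-(3:ℝ)/2)) := by ring
      _ = g s := by rw [← Real.rpow_add hs0]; norm_num
    have he2 : ∫ s in Ioi r, φ s ^ (2:ℝ) = ∫ s in Ioi r, s ^ 3 * g s ^ 2 := by
      refine setIntegral_congr_fun measurableSet_Ioi fun s hs => ?_
      rw [Real.rpow_two]
      exact (hsq_φ hs).symm
    have he3 : ∫ s in Ioi r, ψ s ^ (2:ℝ) = r ^ (-2:ℝ) / 2 := by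
      have heq : ∫ s in Ioi r, ψ s ^ (2:ℝ) = ∫ s in Ioi r, s ^ (-3:ℝ) := by
        refine setIntegral_congr_fun measurableSet_Ioi fun s hs => ?_
        rw [Real.rpow_two]
        exact (hsq_ψ hs).symm
      rw [heq, integral_Ioi_rpow_of_lt (by norm_num) hr]
      norm_num
    rw [he1, he2, he3] at hCS
    have hmono : (∫ s in Ioi r, s ^ 3 * g s ^ 2) ^ ((1:ℝ)/2) ≤ J ^ ((1:ℝ)/2) := by
      refine Real.rpow_le_rpow (setIntegral_nonneg measurableSet_Ioi fun s hs => ?_) ?_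
        (by norm_num)
      · have h0 : (0:ℝ) < s := hr.trans hs
        positivity
      · refine setIntegral_mono_set hJint ?_
          (HasSubset.Subset.eventuallyLE (Ioi_subset_Ioi hr.le))
        filter_upwards [ae_restrict_mem measurableSet_Ioi] with s hs
        have h0 : (0:ℝ) < s := hs
        positivity
    have hBnn : (0:ℝ) ≤ (r ^ (-2:ℝ) / 2) ^ ((1:ℝ)/2) :=
      Real.rpow_nonneg (by positivity) _
    have hrB : r * ((r ^ (-2:ℝ) / 2) ^ ((1:ℝ)/2)) = ((1:ℝ)/2) ^ ((1:ℝ)/2) := by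
      have h1 : r ^ (-2:ℝ) / 2 = r ^ (-2:ℝ) * (1/2) := by ring
      rw [h1, Real.mul_rpow (Real.rpow_nonneg hr.le _) (by norm_num),
        ← Real.rpow_mul hr.le]
      norm_num
      rw [Real.rpow_neg_one]
      field_simp
    have hJI : J = 1/(4*V) * I := by
      rw [hpolar]
      field_simp
    have hJhalf : J ^ ((1:ℝ)/2) = (1/(4*V)) ^ ((1:ℝ)/2) * I ^ ((1:ℝ)/2) := by
      rw [hJI, Real.mul_rpow (by positivity) hInonneg]
    calc r * |u x| = r * |f r| := by rw [hux]
    _ ≤ r * ∫ s in Ioi r, g s := mul_le_mul_of_nonneg_left habs hr.le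
    _ ≤ r * ((∫ s in Ioi r, s ^ 3 * g s ^ 2) ^ ((1:ℝ)/2) * (r ^ (-2:ℝ) / 2) ^ ((1:ℝ)/2)) :=
        mul_le_mul_of_nonneg_left hCS hr.le
    _ ≤ r * (J ^ ((1:ℝ)/2) * (r ^ (-2:ℝ) / 2) ^ ((1:ℝ)/2)) :=
        mul_le_mul_of_nonneg_left (mul_le_mul_of_nonneg_right hmono hBnn) hr.le
    _ = ((1:ℝ)/2) ^ ((1:ℝ)/2) * J ^ ((1:ℝ)/2) := by
        rw [show r * (J ^ ((1:ℝ)/2) * (r ^ (-2:ℝ) / 2) ^ ((1:ℝ)/2))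
            = (r * ((r ^ (-2:ℝ) / 2) ^ ((1:ℝ)/2))) * J ^ ((1:ℝ)/2) by ring, hrB]
    _ = (1/(4*V)) ^ ((1:ℝ)/2) * (1/2) ^ ((1:ℝ)/2) * I ^ ((1:ℝ)/2) := by
        rw [hJhalf]
        ring
end

section
/- Let C > 1 and E, Z, ε > 0. Then the sum ∑_{k=1}^{K} ε / log(3 + E + C^{2k} Z²) is bounded below by c·ε·log(1 + K / log(3 + E + Z²)) / log C for some universal constant c > 0 (for K sufficiently large). -/
open Real Finset

/-- Lower bound for the sum of reciprocals of logarithms along a geometric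
progression, for K sufficiently large. -/
theorem sum_reciprocal_log_lower_bound :
    ∃ c > 0, ∀ C E Z ε : ℝ, 1 < C → 0 < E → 0 < Z → 0 < ε →
      ∃ K₀ : ℕ, ∀ K : ℕ, K₀ ≤ K →
        c * ε * Real.log (1 + (K : ℝ) / Real.log (3 + E + Z ^ 2)) / Real.log C ≤
          ∑ k ∈ Finset.Icc 1 K, ε / Real.log (3 + E + C ^ (2 * k) * Z ^ 2) := by
  refine ⟨1/8, by norm_num, fun C E Z ε hC hE hZ hε => ?_⟩
  set L := Real.log (3 + E + Z ^ 2) with hLdef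
  have hL1 : 1 ≤ L := by
    rw [hLdef, Real.le_log_iff_exp_le (by positivity)]
    have h9 := Real.exp_one_lt_d9
    nlinarith [sq_nonneg Z]
  have hlogC : 0 < Real.log C := Real.log_pos hC
  set a := 2 * Real.log C with hadef
  have ha : 0 < a := by positivity
  set b := L / a with hbdef
  have hb : 0 < b := by positivity
  refine ⟨max 2 ⌈(1+b)^2⌉₊, fun K hK => ?_⟩
  have hK2 : 2 ≤ K := le_trans (le_max_left _ _) hK
  have hK2' : (2:ℝ) ≤ (K:ℝ) := by exact_mod_cast hK2
  have hKb : (1+b)^2 ≤ (K:ℝ) := by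
    have h1 := Nat.le_ceil ((1+b)^2)
    have h2 : (⌈(1+b)^2⌉₊ : ℝ) ≤ (K:ℝ) := by
      exact_mod_cast le_trans (le_max_right _ _) hK
    linarith
  -- Step 1: termwise lower bound
  have step1 : ∀ k ∈ Finset.Icc 1 K,
      (ε/a) * (1/((k:ℝ)+b)) ≤ ε / Real.log (3 + E + C ^ (2*k) * Z^2) := by
    intro k _
    have hCpos : (0:ℝ) < C := lt_trans one_pos hC
    have hC1 : (1:ℝ) ≤ C ^ (2*k) := one_le_pow₀ hC.le
    have hZ2 : 0 < Z^2 := by positivity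
    have hlogpos : 0 < Real.log (3 + E + C ^ (2*k) * Z^2) := by
      apply Real.log_pos; nlinarith
    have hub : Real.log (3 + E + C ^ (2*k) * Z^2) ≤ a * k + L := by
      have h1 : 3 + E + C ^ (2*k) * Z^2 ≤ C ^ (2*k) * (3 + E + Z^2) := by nlinarith
      have h2 : Real.log (C ^ (2*k) * (3 + E + Z^2))
          = ((2*k : ℕ) : ℝ) * Real.log C + L := by
        rw [Real.log_mul (by positivity) (by positivity), Real.log_pow]
      calc Real.log (3 + E + C ^ (2*k) * Z^2)
          ≤ Real.log (C ^ (2*k) * (3 + E + Z^2)) :=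
            Real.log_le_log (by positivity) h1
        _ = ((2*k : ℕ) : ℝ) * Real.log C + L := h2
        _ = a * k + L := by push_cast [hadef]; ring
    have hkb : (0:ℝ) < (k:ℝ) + b := by positivity
    have hab : a * ((k:ℝ) + b) = a * k + L := by
      have hbl : a * b = L := by
        rw [hbdef]; field_simp
      rw [mul_add, hbl]
    have heq : (ε/a) * (1/((k:ℝ)+b)) = ε / (a * k + L) := by
      rw [div_mul_div_comm, mul_one, hab]
    rw [heq]
    apply div_le_div_of_nonneg_left hε.le hlogpos
    exact hub
  -- Step 2: telescoping lower bound
  have step2 : (ε/a) * (Real.log ((K:ℝ)+1+b) - Real.log (1+b)) ≤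
      ∑ k ∈ Finset.Icc 1 K, (ε/a) * (1/((k:ℝ)+b)) := by
    rw [← Finset.mul_sum]
    apply mul_le_mul_of_nonneg_left _ (by positivity)
    have tele := Finset.sum_range_sub (fun i => Real.log ((i:ℝ)+1+b)) K
    have h1b : (0:ℝ) < 1 + b := by linarith
    calc Real.log ((K:ℝ)+1+b) - Real.log (1+b)
        = ∑ i ∈ Finset.range K,
            (Real.log (((i+1 : ℕ):ℝ)+1+b) - Real.log ((i:ℝ)+1+b)) := by
          rw [tele]; norm_num
      _ ≤ ∑ i ∈ Finset.range K, 1/((i:ℝ)+1+b) := by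
          apply Finset.sum_le_sum
          intro i _
          set t : ℝ := (i:ℝ)+1+b with htdef
          have ht : 0 < t := by positivity
          have h := Real.log_le_sub_one_of_pos (show (0:ℝ) < (t+1)/t by positivity)
          rw [Real.log_div (by positivity) (ne_of_gt ht)] at h
          have heq2 : (t+1)/t - 1 = 1/t := by field_simp; ring
          have : Real.log (t+1) - Real.log t ≤ 1/t := by linarith
          calc Real.log (((i+1 : ℕ):ℝ)+1+b) - Real.log ((i:ℝ)+1+b)
              = Real.log (t+1) - Real.log t := by
                rw [htdef]; push_cast; ring_nf
            _ ≤ 1/t := this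
      _ = ∑ k ∈ Finset.Icc 1 K, 1/((k:ℝ)+b) := by
          rw [show Finset.Icc 1 K = Finset.Ico 1 (K+1) by rw [Finset.Ico_add_one_right_eq_Icc],
            Finset.sum_Ico_eq_sum_range]
          apply Finset.sum_congr (by norm_num)
          intro i _
          push_cast; ring_nf
  -- Step 3: compare with the claimed lower bound
  have hlogK : 0 ≤ Real.log (K:ℝ) := Real.log_nonneg (by linarith)
  have h1 : Real.log (1 + (K:ℝ)/L) ≤ 2 * Real.log (K:ℝ) := by
    have hKL : (K:ℝ)/L ≤ (K:ℝ) := by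
      rw [div_le_iff₀ (by linarith)]; nlinarith
    have hle : 1 + (K:ℝ)/L ≤ (K:ℝ)^2 := by nlinarith
    calc Real.log (1 + (K:ℝ)/L) ≤ Real.log ((K:ℝ)^2) :=
          Real.log_le_log (by positivity) hle
      _ = 2 * Real.log (K:ℝ) := by
          rw [show ((K:ℝ)^2) = (K:ℝ)^(2:ℕ) by norm_num, Real.log_pow]; norm_num
  have h2 : Real.log (K:ℝ) / 2 ≤ Real.log ((K:ℝ)+1+b) - Real.log (1+b) := by
    have h1b : (0:ℝ) < 1+b := by linarith
    have h' : 1+b ≤ Real.sqrt (K:ℝ) := by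
      rw [← Real.sqrt_sq (le_of_lt h1b)]
      exact Real.sqrt_le_sqrt hKb
    have hsq : Real.sqrt (K:ℝ) * (1+b) ≤ (K:ℝ) := by
      calc Real.sqrt (K:ℝ) * (1+b) ≤ Real.sqrt (K:ℝ) * Real.sqrt (K:ℝ) := by
            nlinarith [Real.sqrt_nonneg (K:ℝ)]
        _ = (K:ℝ) := Real.mul_self_sqrt (by positivity)
    have hdiv : Real.sqrt (K:ℝ) ≤ ((K:ℝ)+1+b)/(1+b) := by
      rw [le_div_iff₀ h1b]; linarith
    have hlog : Real.log (Real.sqrt (K:ℝ)) ≤ Real.log (((K:ℝ)+1+b)/(1+b)) :=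
      Real.log_le_log (Real.sqrt_pos.mpr (by linarith)) hdiv
    rw [Real.log_sqrt (by positivity), Real.log_div (by positivity) (ne_of_gt h1b)] at hlog
    linarith
  have heq : 1/8 * ε * Real.log (1 + (K:ℝ)/L) / Real.log C
      = (ε/a) * (Real.log (1+(K:ℝ)/L) / 4) := by
    rw [hadef]
    generalize Real.log (1 + (K:ℝ)/L) = x
    field_simp
    ring
  calc 1/8 * ε * Real.log (1 + (K:ℝ)/L) / Real.log C
      = (ε/a) * (Real.log (1+(K:ℝ)/L) / 4) := heq
    _ ≤ (ε/a) * (Real.log ((K:ℝ)+1+b) - Real.log (1+b)) := by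
        apply mul_le_mul_of_nonneg_left _ (by positivity)
        linarith
    _ ≤ ∑ k ∈ Finset.Icc 1 K, (ε/a) * (1/((k:ℝ)+b)) := step2
    _ ≤ ∑ k ∈ Finset.Icc 1 K, ε / Real.log (3 + E + C ^ (2*k) * Z^2) :=
        Finset.sum_le_sum step1
end
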